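/- The quadratic form q on Γ(2g,2)/Γ(2g,4) given by q([[I+2a,2b],[2c,I+2d]]) = Tr(a) + ⟨Diag(b),Diag(c)⟩ mod 2 is invariant under conjugation by Sp(2g,ℤ). -/

import Mathlib

open Matrix

/-- The standard symplectic form matrix `J = [[0, I], [-I, 0]]`. -/
def Jmat (g : ℕ) (R : Type*) [CommRing R] :
    Matrix (Fin g ⊕ Fin g) (Fin g ⊕ Fin g) R :=
  Matrix.fromBlocks 0 1 (-1) 0

/-- The set of integral symplectic matrices, `Sp(2g, ℤ)`. -/
def SpSet (g : ℕ) : Set (Matrix (Fin g ⊕ Fin g) (Fin g ⊕ Fin g) ℤ) :=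
  {X | Xᵀ * Jmat g ℤ * X = Jmat g ℤ}

/-- The subset `𝔎` of `Sp(2g, ℤ)`: symplectic matrices of the form
`[[I+2a, 2b], [2c, I+2d]]` with `Diag b` and `Diag c` even and `Tr a` even. -/
def KSet (g : ℕ) : Set (Matrix (Fin g ⊕ Fin g) (Fin g ⊕ Fin g) ℤ) :=
  {X | X ∈ SpSet g ∧ ∃ a b c d : Matrix (Fin g) (Fin g) ℤ,
    X = Matrix.fromBlocks (1 + 2 • a) (2 • b) (2 • c) (1 + 2 • d) ∧
    (∀ i, (2:ℤ) ∣ b i i) ∧ (∀ i, (2:ℤ) ∣ c i i) ∧ (2:ℤ) ∣ Matrix.trace a}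

/-- The principal congruence subgroup `Γ(2g, N)`: symplectic integral matrices
congruent to the identity modulo `N`. -/
def GammaSet (g : ℕ) (N : ℤ) : Set (Matrix (Fin g ⊕ Fin g) (Fin g ⊕ Fin g) ℤ) :=
  {X | X ∈ SpSet g ∧ ∀ i j, N ∣ (X i j - (1 : Matrix (Fin g ⊕ Fin g) (Fin g ⊕ Fin g) ℤ) i j)}

/-- For `X = [[I+2a, 2b], [2c, I+2d]] ∈ Γ(2g,2)`, the quantity
`Tr a + ⟨Diag b, Diag c⟩ mod 2`, computed from the entries of `X`. -/
def qform (g : ℕ) (X : Matrix (Fin g ⊕ Fin g) (Fin g ⊕ Fin g) ℤ) : ZMod 2 :=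
  (((∑ i : Fin g, (X (Sum.inl i) (Sum.inl i) - 1) / 2) +
    ∑ i : Fin g, (X (Sum.inl i) (Sum.inr i) / 2) * (X (Sum.inr i) (Sum.inl i) / 2) : ℤ) : ZMod 2)


open Finset

lemma char2_add_self (a : ZMod 2) : a + a = 0 := by revert a; decide

lemma char2_eq_of_add {a b : ZMod 2} (h : a + b = 0) : a = b := by
  revert h; revert a b; decide

lemma char2_sq (a : ZMod 2) : a * a = a := by revert a; decide

lemma sum_symm_eq_diag {ι : Type*} [Fintype ι] [DecidableEq ι]
    (f : ι → ι → ZMod 2) (hf : ∀ k l, f k l = f l k) :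
    ∑ k, ∑ l, f k l = ∑ k, f k k := by
  classical
  have h1 : ∑ k, ∑ l, f k l = ∑ p ∈ Finset.univ ×ˢ Finset.univ, f p.1 p.2 := by
    rw [Finset.sum_product]
  rw [h1, ← Finset.diag_union_offDiag, Finset.sum_union (Finset.disjoint_diag_offDiag _),
    Finset.sum_diag]
  have h3 : ∑ p ∈ (Finset.univ : Finset ι).offDiag, f p.1 p.2 = 0 := by
    refine Finset.sum_involution (fun p _ => (p.2, p.1)) ?_ ?_ ?_ ?_
    · intro p hp
      rw [hf]
      exact char2_add_self _
    · intro p hp hne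
      simp only [Finset.mem_offDiag] at hp
      intro hc
      have h1 : p.2 = p.1 := congrArg Prod.fst hc
      exact hp.2.2 h1.symm
    · intro p hp
      simp only [Finset.mem_offDiag] at hp ⊢
      exact ⟨Finset.mem_univ _, Finset.mem_univ _, Ne.symm hp.2.2⟩
    · intro p hp; rfl
  rw [h3, add_zero]

lemma zmod2_neg (x : ZMod 2) : -x = x := by revert x; decide

/-- auxiliary matrix `M` -/
private def MM {g : ℕ} (R : Matrix (Fin g ⊕ Fin g) (Fin g ⊕ Fin g) (ZMod 2))
    (k l : Fin g ⊕ Fin g) : ZMod 2 :=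
  ∑ i, R k (Sum.inr i) * R l (Sum.inl i)

/-- auxiliary matrix `N` -/
private def NN {g : ℕ} (k l : Fin g ⊕ Fin g) : ZMod 2 :=
  (fromBlocks (0 : Matrix (Fin g) (Fin g) (ZMod 2)) 0 1 0) k l

lemma keylemma {g : ℕ} (S R : Matrix (Fin g ⊕ Fin g) (Fin g ⊕ Fin g) (ZMod 2))
    (hS : ∀ k l, S k l = S l k)
    (hR : R * Jmat g (ZMod 2) * Rᵀ = Jmat g (ZMod 2)) :
    ((∑ i, (Rᵀ*S*R) (Sum.inr i) (Sum.inl i)) +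
      ∑ i, (Rᵀ*S*R) (Sum.inl i) (Sum.inl i) * (Rᵀ*S*R) (Sum.inr i) (Sum.inr i))
    = (∑ i, S (Sum.inr i) (Sum.inl i)) +
      ∑ i, S (Sum.inl i) (Sum.inl i) * S (Sum.inr i) (Sum.inr i) := by
  classical
  have hT : ∀ α β, (Rᵀ*S*R) α β = ∑ k, ∑ l, R k α * S k l * R l β := by
    intro α β
    simp only [Matrix.mul_apply, Matrix.transpose_apply, Finset.sum_mul]
    rw [Finset.sum_comm]
  have hMM : ∀ k l, MM R k l + MM R l k = Jmat g (ZMod 2) k l := by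
    intro k l
    have h := congrFun (congrFun hR k) l
    rw [show (R * Jmat g (ZMod 2) * Rᵀ) k l = MM R k l + MM R l k from ?_] at h
    · exact h
    · simp only [Matrix.mul_apply, Matrix.transpose_apply, Jmat, Fintype.sum_sum_type,
        Matrix.fromBlocks_apply₁₁, Matrix.fromBlocks_apply₁₂, Matrix.fromBlocks_apply₂₁,
        Matrix.fromBlocks_apply₂₂, Matrix.zero_apply, Matrix.one_apply, Matrix.neg_apply,
        mul_ite, mul_zero, mul_one, mul_neg, Finset.sum_ite_eq, Finset.sum_ite_eq',
        Finset.mem_univ, if_true, Finset.sum_add_distrib, Finset.sum_neg_distrib,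
        Finset.sum_const_zero, zero_add, add_zero, zmod2_neg, MM]
      congr 1
      exact Finset.sum_congr rfl fun j _ => mul_comm _ _
  have hNN : ∀ k l : Fin g ⊕ Fin g, NN k l + NN l k = Jmat g (ZMod 2) k l := by
    have hneg : ∀ x : ZMod 2, -x = x := zmod2_neg
    rintro (a|a) (b|b) <;>
      simp [NN, Jmat, Matrix.one_apply, Matrix.neg_apply, hneg, eq_comm]
  have hW : ∀ k l, MM R k l + NN k l = MM R l k + NN l k := by
    intro k l
    apply char2_eq_of_add
    have h0 : MM R k l + NN k l + (MM R l k + NN l k)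
        = (MM R k l + MM R l k) + (NN k l + NN l k) := by ring
    rw [h0, hMM, hNN, char2_add_self]
  have hdiag : ∀ α, (Rᵀ*S*R) α α = ∑ k, R k α * S k k := by
    intro α
    rw [hT α α]
    rw [sum_symm_eq_diag (fun k l => R k α * S k l * R l α)
      (fun k l => by rw [hS k l]; ring)]
    refine Finset.sum_congr rfl fun k _ => ?_
    have : R k α * S k k * R k α = R k α * R k α * S k k := by ring
    rw [this, char2_sq]
  have ha : ∑ i, (Rᵀ*S*R) (Sum.inr i) (Sum.inl i) = ∑ k, ∑ l, S k l * MM R k l := by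
    calc ∑ i, (Rᵀ*S*R) (Sum.inr i) (Sum.inl i)
        = ∑ i, ∑ k, ∑ l, R k (Sum.inr i) * S k l * R l (Sum.inl i) :=
          Finset.sum_congr rfl fun i _ => hT _ _
      _ = ∑ k, ∑ i, ∑ l, R k (Sum.inr i) * S k l * R l (Sum.inl i) := Finset.sum_comm
      _ = ∑ k, ∑ l, ∑ i, R k (Sum.inr i) * S k l * R l (Sum.inl i) :=
          Finset.sum_congr rfl fun k _ => Finset.sum_comm
      _ = ∑ k, ∑ l, S k l * MM R k l := by
          refine Finset.sum_congr rfl fun k _ => Finset.sum_congr rfl fun l _ => ?_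
          simp only [MM, Finset.mul_sum]
          exact Finset.sum_congr rfl fun i _ => by ring
  have hc : ∑ i, (Rᵀ*S*R) (Sum.inl i) (Sum.inl i) * (Rᵀ*S*R) (Sum.inr i) (Sum.inr i)
      = ∑ k, ∑ l, (S k k * S l l) * MM R l k := by
    calc ∑ i, (Rᵀ*S*R) (Sum.inl i) (Sum.inl i) * (Rᵀ*S*R) (Sum.inr i) (Sum.inr i)
        = ∑ i, (∑ k, R k (Sum.inl i) * S k k) * (∑ l, R l (Sum.inr i) * S l l) :=
          Finset.sum_congr rfl fun i _ => by rw [hdiag, hdiag]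
      _ = ∑ i, ∑ k, ∑ l, (R k (Sum.inl i) * S k k) * (R l (Sum.inr i) * S l l) :=
          Finset.sum_congr rfl fun i _ => by rw [Finset.sum_mul_sum]
      _ = ∑ k, ∑ i, ∑ l, (R k (Sum.inl i) * S k k) * (R l (Sum.inr i) * S l l) :=
          Finset.sum_comm
      _ = ∑ k, ∑ l, ∑ i, (R k (Sum.inl i) * S k k) * (R l (Sum.inr i) * S l l) :=
          Finset.sum_congr rfl fun k _ => Finset.sum_comm
      _ = ∑ k, ∑ l, (S k k * S l l) * MM R l k := by
          refine Finset.sum_congr rfl fun k _ => Finset.sum_congr rfl fun l _ => ?_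
          simp only [MM, Finset.mul_sum]
          exact Finset.sum_congr rfl fun i _ => by ring
  have hc' : ∑ i, (Rᵀ*S*R) (Sum.inl i) (Sum.inl i) * (Rᵀ*S*R) (Sum.inr i) (Sum.inr i)
      = ∑ k, ∑ l, (S k k * S l l) * MM R k l := by
    rw [hc, Finset.sum_comm]
    exact Finset.sum_congr rfl fun k _ => Finset.sum_congr rfl fun l _ => by ring
  have hd : ∑ i, S (Sum.inr i) (Sum.inl i) = ∑ k, ∑ l, S k l * NN k l := by
    simp [NN, Fintype.sum_sum_type, Matrix.one_apply, mul_ite, Finset.sum_ite_eq',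
      Finset.mem_univ]
  have he : ∑ i, S (Sum.inl i) (Sum.inl i) * S (Sum.inr i) (Sum.inr i)
      = ∑ k, ∑ l, (S k k * S l l) * NN k l := by
    simp only [NN, Fintype.sum_sum_type, Matrix.fromBlocks_apply₁₁, Matrix.fromBlocks_apply₁₂,
      Matrix.fromBlocks_apply₂₁, Matrix.fromBlocks_apply₂₂, Matrix.zero_apply,
      Matrix.one_apply, mul_ite, mul_one, mul_zero, Finset.sum_ite_eq', Finset.sum_ite_eq,
      Finset.mem_univ, if_true, Finset.sum_const_zero, zero_add, add_zero]
    exact Finset.sum_congr rfl fun i _ => by ring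
  rw [ha, hc', hd, he]
  apply char2_eq_of_add
  have hcomb : (∑ k, ∑ l, S k l * MM R k l) + (∑ k, ∑ l, (S k k * S l l) * MM R k l) +
      ((∑ k, ∑ l, S k l * NN k l) + ∑ k, ∑ l, (S k k * S l l) * NN k l)
      = ∑ k, ∑ l, (S k l + S k k * S l l) * (MM R k l + NN k l) := by
    simp only [← Finset.sum_add_distrib]
    exact Finset.sum_congr rfl fun k _ => Finset.sum_congr rfl fun l _ => by ring
  rw [hcomb]
  rw [sum_symm_eq_diag (fun k l => (S k l + S k k * S l l) * (MM R k l + NN k l))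
    (fun k l => by rw [hS k l, hW k l]; ring)]
  refine Finset.sum_eq_zero fun k _ => ?_
  rw [char2_sq, char2_add_self, zero_mul]

lemma qform_eval (g : ℕ) (W : Matrix (Fin g ⊕ Fin g) (Fin g ⊕ Fin g) ℤ) :
    qform g (1 + (2:ℤ) • W) =
      (((∑ i : Fin g, W (Sum.inl i) (Sum.inl i)) +
        ∑ i : Fin g, W (Sum.inl i) (Sum.inr i) * W (Sum.inr i) (Sum.inl i) : ℤ) : ZMod 2) := by
  unfold qform
  congr 2
  · refine Finset.sum_congr rfl fun i _ => ?_
    simp only [Matrix.add_apply, Matrix.smul_apply, smul_eq_mul, Matrix.one_apply_eq]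
    omega
  · refine Finset.sum_congr rfl fun i _ => ?_
    have h1 : (1 : Matrix (Fin g ⊕ Fin g) (Fin g ⊕ Fin g) ℤ) (Sum.inl i) (Sum.inr i) = 0 :=
      Matrix.one_apply_ne (by simp)
    have h2 : (1 : Matrix (Fin g ⊕ Fin g) (Fin g ⊕ Fin g) ℤ) (Sum.inr i) (Sum.inl i) = 0 :=
      Matrix.one_apply_ne (by simp)
    simp only [Matrix.add_apply, Matrix.smul_apply, smul_eq_mul, h1, h2]
    congr 1 <;> omega

lemma Jmul_inl {g : ℕ} (T : Matrix (Fin g ⊕ Fin g) (Fin g ⊕ Fin g) (ZMod 2)) (i : Fin g)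
    (β : Fin g ⊕ Fin g) : (Jmat g (ZMod 2) * T) (Sum.inl i) β = T (Sum.inr i) β := by
  simp [Jmat, Matrix.mul_apply, Fintype.sum_sum_type, Matrix.one_apply, ite_mul,
    Finset.sum_ite_eq, Finset.sum_ite_eq']

lemma Jmul_inr {g : ℕ} (T : Matrix (Fin g ⊕ Fin g) (Fin g ⊕ Fin g) (ZMod 2)) (i : Fin g)
    (β : Fin g ⊕ Fin g) : (Jmat g (ZMod 2) * T) (Sum.inr i) β = T (Sum.inl i) β := by
  simp [Jmat, Matrix.mul_apply, Fintype.sum_sum_type, Matrix.one_apply, ite_mul,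
    Finset.sum_ite_eq, Finset.sum_ite_eq', zmod2_neg, Matrix.neg_apply]


private def m2 {g : ℕ} (A : Matrix (Fin g ⊕ Fin g) (Fin g ⊕ Fin g) ℤ) :
    Matrix (Fin g ⊕ Fin g) (Fin g ⊕ Fin g) (ZMod 2) :=
  A.map (Int.cast)

lemma m2_mul {g : ℕ} (A B : Matrix (Fin g ⊕ Fin g) (Fin g ⊕ Fin g) ℤ) :
    m2 (A * B) = m2 A * m2 B :=
  Matrix.map_mul (f := Int.castRingHom (ZMod 2))

lemma m2_add {g : ℕ} (A B : Matrix (Fin g ⊕ Fin g) (Fin g ⊕ Fin g) ℤ) :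
    m2 (A + B) = m2 A + m2 B :=
  Matrix.map_add _ (by simp) A B

lemma m2_transpose {g : ℕ} (A : Matrix (Fin g ⊕ Fin g) (Fin g ⊕ Fin g) ℤ) :
    m2 Aᵀ = (m2 A)ᵀ :=
  Matrix.transpose_map

lemma m2_zero {g : ℕ} : m2 (0 : Matrix (Fin g ⊕ Fin g) (Fin g ⊕ Fin g) ℤ) = 0 := by
  ext a b; simp [m2]

lemma m2_smul2 {g : ℕ} (A : Matrix (Fin g ⊕ Fin g) (Fin g ⊕ Fin g) ℤ) :
    m2 ((2:ℤ) • A) = 0 := by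
  ext a b
  simp only [m2, Matrix.map_apply, Matrix.smul_apply, smul_eq_mul, Int.cast_mul,
    Matrix.zero_apply]
  rw [show ((2:ℤ) : ZMod 2) = 0 by decide, zero_mul]

lemma m2_J {g : ℕ} : m2 (Jmat g ℤ) = Jmat g (ZMod 2) := by
  ext (a|a) (b|b) <;>
    simp [m2, Jmat, Matrix.map_apply, Matrix.one_apply, Matrix.neg_apply, apply_ite]

lemma JT2 {g : ℕ} : (Jmat g (ZMod 2))ᵀ = Jmat g (ZMod 2) := by
  ext (a|a) (b|b) <;>
    simp [Jmat, Matrix.transpose_apply, Matrix.one_apply, Matrix.neg_apply, zmod2_neg,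
      eq_comm]

lemma JJ2 {g : ℕ} : Jmat g (ZMod 2) * Jmat g (ZMod 2) = 1 := by
  have hneg : (-1 : Matrix (Fin g) (Fin g) (ZMod 2)) = 1 := by
    ext a b; simp [Matrix.one_apply, Matrix.neg_apply, apply_ite, zmod2_neg]
  rw [Jmat, Matrix.fromBlocks_multiply]
  simp [hneg, Matrix.fromBlocks_one]

theorem stmt8 (g : ℕ) (hg : 1 ≤ g)
    (P Q : Matrix (Fin g ⊕ Fin g) (Fin g ⊕ Fin g) ℤ)
    (hP : P ∈ SpSet g) (hPQ : P * Q = 1) (hQP : Q * P = 1) :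
    ∀ X ∈ GammaSet g 2, qform g (P * X * Q) = qform g X := by
  intro X hX
  obtain ⟨hXsp, hX2⟩ := hX
  classical
  set J : Matrix (Fin g ⊕ Fin g) (Fin g ⊕ Fin g) ℤ := Jmat g ℤ with hJ
  set Y : Matrix (Fin g ⊕ Fin g) (Fin g ⊕ Fin g) ℤ :=
    Matrix.of (fun α β => (X α β - (1 : Matrix (Fin g ⊕ Fin g) (Fin g ⊕ Fin g) ℤ) α β) / 2)
    with hY
  have hXmat : X = 1 + (2:ℤ) • Y := by
    ext α β
    have h := hX2 α β
    simp only [Matrix.add_apply, Matrix.smul_apply, smul_eq_mul, hY, Matrix.of_apply]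
    omega
  -- conjugate
  have hX' : P * X * Q = 1 + (2:ℤ) • (P * Y * Q) := by
    rw [hXmat, mul_add, mul_one, add_mul, hPQ, Matrix.mul_smul, Matrix.smul_mul]
  -- symplectic relation for Y over ℤ
  have hrel : Yᵀ * J + J * Y + (2:ℤ) • (Yᵀ * J * Y) = 0 := by
    have h1 : (1 + (2:ℤ) • Y)ᵀ * J * (1 + (2:ℤ) • Y)
        = J + (2:ℤ) • (Yᵀ * J + J * Y + (2:ℤ) • (Yᵀ * J * Y)) := by
      simp only [Matrix.transpose_add, Matrix.transpose_one, Matrix.transpose_smul,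
        add_mul, mul_add, one_mul, mul_one, Matrix.smul_mul, Matrix.mul_smul,
        smul_add, smul_smul]
      abel
    have h2 : Xᵀ * J * X = J := hXsp
    rw [hXmat, h1] at h2
    have h3 : (2:ℤ) • (Yᵀ * J + J * Y + (2:ℤ) • (Yᵀ * J * Y)) = 0 := by
      rwa [add_eq_left] at h2
    ext α β
    have h4 := congrFun (congrFun h3 α) β
    simp only [Matrix.smul_apply, smul_eq_mul, Matrix.zero_apply] at h4 ⊢
    omega
  -- pass to ZMod 2
  have hrel2 : (m2 Y)ᵀ * Jmat g (ZMod 2) + Jmat g (ZMod 2) * (m2 Y) = 0 := by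
    have h := congrArg m2 hrel
    rw [hJ] at h
    rw [m2_add, m2_add, m2_mul, m2_mul, m2_smul2, m2_zero, m2_transpose, m2_J, add_zero] at h
    exact h
  have hneg : ∀ M : Matrix (Fin g ⊕ Fin g) (Fin g ⊕ Fin g) (ZMod 2), -M = M := by
    intro M; ext a b; simp [Matrix.neg_apply, zmod2_neg]
  have hST : (Jmat g (ZMod 2) * m2 Y)ᵀ = Jmat g (ZMod 2) * m2 Y := by
    rw [Matrix.transpose_mul, JT2]
    have h := eq_neg_of_add_eq_zero_left hrel2
    rw [hneg] at h
    exact h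
  have hSsym : ∀ k l, (Jmat g (ZMod 2) * m2 Y) k l = (Jmat g (ZMod 2) * m2 Y) l k := by
    intro k l
    conv_lhs => rw [← hST]
    rfl
  have hP2sp : (m2 P)ᵀ * Jmat g (ZMod 2) * m2 P = Jmat g (ZMod 2) := by
    have h := congrArg m2 (hP : Pᵀ * Jmat g ℤ * P = Jmat g ℤ)
    rw [m2_mul, m2_mul, m2_transpose, m2_J] at h
    exact h
  have hP2Q2 : m2 P * m2 Q = 1 := by
    have h := congrArg m2 hPQ
    rw [m2_mul] at h
    rw [h]
    ext a b; simp [m2, Matrix.map_apply, Matrix.one_apply, apply_ite]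
  have hQ2P2 : m2 Q * m2 P = 1 := by
    have h := congrArg m2 hQP
    rw [m2_mul] at h
    rw [h]
    ext a b; simp [m2, Matrix.map_apply, Matrix.one_apply, apply_ite]
  have hQsp : (m2 Q)ᵀ * Jmat g (ZMod 2) * m2 Q = Jmat g (ZMod 2) := by
    calc (m2 Q)ᵀ * Jmat g (ZMod 2) * m2 Q
        = (m2 Q)ᵀ * ((m2 P)ᵀ * Jmat g (ZMod 2) * m2 P) * m2 Q := by rw [hP2sp]
      _ = (m2 P * m2 Q)ᵀ * Jmat g (ZMod 2) * (m2 P * m2 Q) := by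
          rw [Matrix.transpose_mul]
          simp only [Matrix.mul_assoc]
      _ = Jmat g (ZMod 2) := by rw [hP2Q2, Matrix.transpose_one, one_mul, mul_one]
  have hJQ : Jmat g (ZMod 2) * (m2 Q)ᵀ * Jmat g (ZMod 2) = m2 P := by
    have h1 : (Jmat g (ZMod 2) * (m2 Q)ᵀ * Jmat g (ZMod 2)) * m2 Q = 1 := by
      calc (Jmat g (ZMod 2) * (m2 Q)ᵀ * Jmat g (ZMod 2)) * m2 Q
          = Jmat g (ZMod 2) * ((m2 Q)ᵀ * Jmat g (ZMod 2) * m2 Q) := by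
            simp only [Matrix.mul_assoc]
        _ = Jmat g (ZMod 2) * Jmat g (ZMod 2) := by rw [hQsp]
        _ = 1 := JJ2
    calc Jmat g (ZMod 2) * (m2 Q)ᵀ * Jmat g (ZMod 2)
        = (Jmat g (ZMod 2) * (m2 Q)ᵀ * Jmat g (ZMod 2)) * (m2 Q * m2 P) := by
          rw [hQ2P2, mul_one]
      _ = ((Jmat g (ZMod 2) * (m2 Q)ᵀ * Jmat g (ZMod 2)) * m2 Q) * m2 P := by
          simp only [Matrix.mul_assoc]
      _ = m2 P := by rw [h1, one_mul]
  have hQQT : m2 Q * Jmat g (ZMod 2) * (m2 Q)ᵀ = Jmat g (ZMod 2) := by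
    have h2 : Jmat g (ZMod 2) * (m2 Q)ᵀ = m2 P * Jmat g (ZMod 2) := by
      calc Jmat g (ZMod 2) * (m2 Q)ᵀ
          = (Jmat g (ZMod 2) * (m2 Q)ᵀ * Jmat g (ZMod 2)) * Jmat g (ZMod 2) := by
            rw [Matrix.mul_assoc, JJ2, mul_one]
        _ = m2 P * Jmat g (ZMod 2) := by rw [hJQ]
    calc m2 Q * Jmat g (ZMod 2) * (m2 Q)ᵀ
        = m2 Q * (Jmat g (ZMod 2) * (m2 Q)ᵀ) := by rw [Matrix.mul_assoc]
      _ = m2 Q * (m2 P * Jmat g (ZMod 2)) := by rw [h2]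
      _ = (m2 Q * m2 P) * Jmat g (ZMod 2) := by rw [Matrix.mul_assoc]
      _ = Jmat g (ZMod 2) := by rw [hQ2P2, one_mul]
  have htrans : m2 (P * Y * Q)
      = Jmat g (ZMod 2) * ((m2 Q)ᵀ * (Jmat g (ZMod 2) * m2 Y) * m2 Q) := by
    rw [m2_mul, m2_mul, ← hJQ]
    simp only [Matrix.mul_assoc]
  have hY2 : m2 Y = Jmat g (ZMod 2) * (Jmat g (ZMod 2) * m2 Y) := by
    rw [← Matrix.mul_assoc, JJ2, one_mul]
  -- evaluate both qforms
  rw [hX', qform_eval g (P * Y * Q)]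
  conv_rhs => rw [hXmat, qform_eval g Y]
  have hcast : ∀ W : Matrix (Fin g ⊕ Fin g) (Fin g ⊕ Fin g) ℤ,
      (((∑ i : Fin g, W (Sum.inl i) (Sum.inl i)) +
        ∑ i : Fin g, W (Sum.inl i) (Sum.inr i) * W (Sum.inr i) (Sum.inl i) : ℤ) : ZMod 2)
      = (∑ i : Fin g, (m2 W) (Sum.inl i) (Sum.inl i)) +
        ∑ i : Fin g, (m2 W) (Sum.inl i) (Sum.inr i) * (m2 W) (Sum.inr i) (Sum.inl i) := by
    intro W
    push_cast
    simp [m2, Matrix.map_apply]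
  rw [hcast, hcast]
  set S := Jmat g (ZMod 2) * m2 Y with hSdef
  set R := m2 Q with hRdef
  have hkey := keylemma S R hSsym hQQT
  calc (∑ i : Fin g, (m2 (P * Y * Q)) (Sum.inl i) (Sum.inl i)) +
        ∑ i : Fin g, (m2 (P * Y * Q)) (Sum.inl i) (Sum.inr i) *
          (m2 (P * Y * Q)) (Sum.inr i) (Sum.inl i)
      = (∑ i : Fin g, (Rᵀ * S * R) (Sum.inr i) (Sum.inl i)) +
        ∑ i : Fin g, (Rᵀ * S * R) (Sum.inl i) (Sum.inl i) *
          (Rᵀ * S * R) (Sum.inr i) (Sum.inr i) := by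
        rw [htrans]
        congr 1
        · exact Finset.sum_congr rfl fun i _ => by rw [Jmul_inl]
        · exact Finset.sum_congr rfl fun i _ => by
            rw [Jmul_inl, Jmul_inr, mul_comm]
    _ = (∑ i : Fin g, S (Sum.inr i) (Sum.inl i)) +
        ∑ i : Fin g, S (Sum.inl i) (Sum.inl i) * S (Sum.inr i) (Sum.inr i) := hkey
    _ = (∑ i : Fin g, (m2 Y) (Sum.inl i) (Sum.inl i)) +
        ∑ i : Fin g, (m2 Y) (Sum.inl i) (Sum.inr i) * (m2 Y) (Sum.inr i) (Sum.inl i) := by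
        have hS2 : ∀ α β, (m2 Y) α β = (Jmat g (ZMod 2) * S) α β := by
          intro α β
          rw [hSdef, ← Matrix.mul_assoc, JJ2, one_mul]
        congr 1
        · exact Finset.sum_congr rfl fun i _ => by
            rw [hS2 (Sum.inl i) (Sum.inl i), Jmul_inl]
        · refine Finset.sum_congr rfl fun i _ => ?_
          rw [hS2 (Sum.inl i) (Sum.inr i), hS2 (Sum.inr i) (Sum.inl i), Jmul_inl, Jmul_inr]
          exact mul_comm _ _
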